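/- Combining the previous three statements: for d > 0, α > 0, c ≥ 0 and every ε > 0 there exists d₀ > 0 such that for all d ≥ d₀ the unique positive solution k(d) of (g/j)(k) = h(k) satisfies 2α/(4 + c) < k(d) < 2α/(4 + c) + ε. In particular k(d) → 2α/(4 + c) as d → ∞. -/

import Mathlib

open Real Filter Set

/-- Key algebraic reduction: the equation implies `exp(2kd) * ((4+c)k - 2α) = (4+c)k + 2α`. -/
lemma stmt7_key (α c k d : ℝ) (hd : 0 < d)
    (heq : c*k*(1 - Real.exp (4*k*d)) / (Real.exp (2*k*d) + Real.exp (4*k*d))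
        = (-2*α - 4*k) * Real.exp (-2*k*d) - 2*α + 4*k) :
    Real.exp (2*k*d) * ((4+c)*k - 2*α) = (4+c)*k + 2*α := by
  have hE : 0 < Real.exp (2*k*d) := Real.exp_pos _
  have h4 : Real.exp (4*k*d) = Real.exp (2*k*d) * Real.exp (2*k*d) := by
    rw [← Real.exp_add]; ring_nf
  have hneg : Real.exp (-2*k*d) = (Real.exp (2*k*d))⁻¹ := by
    rw [← Real.exp_neg]; ring_nf
  set E := Real.exp (2*k*d) with hEdef
  rw [h4, hneg] at heq
  have hEne : E ≠ 0 := ne_of_gt hE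
  have h1E : E + E * E ≠ 0 := by positivity
  field_simp at heq
  have h2 : (E * ((4+c)*k - 2*α) - ((4+c)*k + 2*α)) * (E * (1 + E)) = 0 := by
    linear_combination (-E) * heq
  have h3 : E * (1 + E) ≠ 0 := by positivity
  have h4' : E * ((4+c)*k - 2*α) - ((4+c)*k + 2*α) = 0 :=
    by
      rcases mul_eq_zero.1 h2 with h | h
      · exact h
      · exact absurd h h3
  linarith

theorem stmt7 (α c : ℝ) (hα : 0 < α) (hc : 0 ≤ c) (kk : ℝ → ℝ)
    (hkk : ∀ d : ℝ, 0 < d → 0 < kk d ∧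
      c*(kk d)*(1 - Real.exp (4*(kk d)*d))
          / (Real.exp (2*(kk d)*d) + Real.exp (4*(kk d)*d))
        = (-2*α - 4*(kk d)) * Real.exp (-2*(kk d)*d) - 2*α + 4*(kk d)) :
    (∀ ε : ℝ, 0 < ε → ∃ d₀ : ℝ, 0 < d₀ ∧ ∀ d : ℝ, d₀ ≤ d →
      2*α/(4 + c) < kk d ∧ kk d < 2*α/(4 + c) + ε) ∧
    Filter.Tendsto kk Filter.atTop (nhds (2*α/(4 + c))) := by
  have h4c : (0:ℝ) < 4 + c := by linarith
  set m := 2*α/(4+c) with hm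
  have hmpos : 0 < m := by positivity
  -- lower bound for all d > 0
  have hlow : ∀ d : ℝ, 0 < d → m < kk d := by
    intro d hd
    obtain ⟨hkpos, heq⟩ := hkk d hd
    have hkey := stmt7_key α c (kk d) d hd heq
    have hE : 0 < Real.exp (2*(kk d)*d) := Real.exp_pos _
    have hpos : 0 < (4+c)*(kk d) + 2*α := by positivity
    have hX : 0 < (4+c)*(kk d) - 2*α := by
      by_contra h
      push_neg at h
      nlinarith
    rw [hm, div_lt_iff₀ h4c]
    nlinarith
  -- main ε statement
  have hmain : ∀ ε : ℝ, 0 < ε → ∃ d₀ : ℝ, 0 < d₀ ∧ ∀ d : ℝ, d₀ ≤ d →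
      m < kk d ∧ kk d < m + ε := by
    intro ε hε
    set B := 4*α/((4+c)*ε) with hB
    have hBpos : 0 < B := by positivity
    have hlogB : 0 ≤ Real.log (2 + B) := Real.log_nonneg (by linarith)
    have hdiv : 0 ≤ Real.log (2 + B) / (2*m) := div_nonneg hlogB (by positivity)
    refine ⟨Real.log (2 + B) / (2*m) + 1, by linarith, fun d hd => ?_⟩
    have hlog0 : 0 ≤ Real.log (2 + B) := Real.log_nonneg (by linarith)
    have hd0 : 0 < d := by
      have : 0 ≤ Real.log (2 + B) / (2*m) := by positivity
      linarith
    refine ⟨hlow d hd0, ?_⟩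
    obtain ⟨hkpos, heq⟩ := hkk d hd0
    have hkey := stmt7_key α c (kk d) d hd0 heq
    have hklow := hlow d hd0
    -- exp(2 k d) > 1 + B
    have hEd : 2 + B ≤ Real.exp (2*m*d) := by
      calc 2 + B = Real.exp (Real.log (2 + B)) := (Real.exp_log (by linarith)).symm
        _ ≤ Real.exp (2*m*d) := by
            apply Real.exp_le_exp.2
            have h2m : 0 < 2*m := by positivity
            have : Real.log (2+B) ≤ 2*m*d := by
              rw [div_add' _ _ _ (ne_of_gt h2m)] at hd
              rw [div_le_iff₀ h2m] at hd
              nlinarith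
            linarith
    have hEk : Real.exp (2*m*d) < Real.exp (2*(kk d)*d) := by
      apply Real.exp_lt_exp.2
      nlinarith
    have hE1 : 1 + B < Real.exp (2*(kk d)*d) := by linarith
    -- from key: (E - 1) * ((4+c)k - 2α) = 4α
    have hX : 0 < (4+c)*(kk d) - 2*α := by
      have : m < kk d := hklow
      rw [hm, div_lt_iff₀ h4c] at this
      nlinarith
    have hfac : (Real.exp (2*(kk d)*d) - 1) * ((4+c)*(kk d) - 2*α) = 4*α := by
      nlinarith [hkey]
    have hXlt : (4+c)*(kk d) - 2*α < (4+c)*ε := by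
      have hB4 : B * ((4+c)*ε) = 4*α := by
        rw [hB]; field_simp
      nlinarith
    have : kk d < m + ε := by
      rw [hm]
      rw [div_add' _ _ _ (ne_of_gt h4c), lt_div_iff₀ h4c]
      nlinarith
    exact this
  refine ⟨hmain, ?_⟩
  rw [Metric.tendsto_atTop]
  intro ε hε
  obtain ⟨d₀, hd₀, h⟩ := hmain ε hε
  refine ⟨d₀, fun d hd => ?_⟩
  obtain ⟨h1, h2⟩ := h d hd
  rw [Real.dist_eq, abs_lt]
  constructor <;> linarith
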